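/- Let G be a connected graph of order n without isolated vertices. Then γ(G) + γ^t_StR(G) ≤ 3n/2. -/

import Mathlib

open Finset

variable {V : Type*} [Fintype V]

/-- The degree of a vertex. -/
noncomputable def degN (G : SimpleGraph V) (v : V) : ℕ := {u | G.Adj v u}.ncard

/-- Maximum degree. -/
noncomputable def maxDeg (G : SimpleGraph V) : ℕ := Finset.univ.sup (degN G)

/-- Minimum degree. -/
noncomputable def minDeg (G : SimpleGraph V) : ℕ := sInf {d | ∃ v, degN G v = d}

/-- No isolated vertex. -/
def NoIsolated (G : SimpleGraph V) : Prop := ∀ v, ∃ u, G.Adj v u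

/-- Total strong Roman dominating function. `(Δ+1)/2 = ⌈Δ/2⌉` and
`(m+1)/2 = ⌈m/2⌉` in natural-number arithmetic. -/
def IsTSRDF (G : SimpleGraph V) (f : V → ℕ) : Prop :=
  (∀ v, f v ≤ (maxDeg G + 1) / 2 + 1) ∧
  (∀ v, f v = 0 → ∃ u, G.Adj v u ∧
      1 + ({w | G.Adj u w ∧ f w = 0}.ncard + 1) / 2 ≤ f u) ∧
  (∀ v, 0 < f v → ∃ u, G.Adj v u ∧ 0 < f u)

/-- The total strong Roman domination number. -/
noncomputable def tsrd (G : SimpleGraph V) : ℕ :=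
  sInf {k | ∃ f : V → ℕ, IsTSRDF G f ∧ ∑ v, f v = k}

/-- Dominating set. -/
def IsDS (G : SimpleGraph V) (S : Finset V) : Prop := ∀ v, ∃ u ∈ S, u = v ∨ G.Adj u v

/-- Domination number. -/
noncomputable def domNum (G : SimpleGraph V) : ℕ :=
  sInf {k | ∃ S : Finset V, IsDS G S ∧ S.card = k}

theorem stmt15 (G : SimpleGraph V) (hc : G.Connected) (hni : NoIsolated G) :
    2 * (domNum G + tsrd G) ≤ 3 * Fintype.card V := by
  classical
  set n := Fintype.card V with hn
  -- tsrd ≤ n, witnessed by the constant function 1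
  have htsrd : tsrd G ≤ n := by
    apply Nat.sInf_le
    refine ⟨fun _ => 1, ⟨fun v => Nat.le_add_left 1 _, fun v hv => absurd hv one_ne_zero,
      fun v _ => ?_⟩, by simp [hn]⟩
    obtain ⟨u, hu⟩ := hni v
    exact ⟨u, hu, Nat.one_pos⟩
  -- domNum is attained
  have hne : ∃ S : Finset V, IsDS G S ∧ S.card = domNum G := by
    have : domNum G ∈ {k | ∃ S : Finset V, IsDS G S ∧ S.card = k} := by
      apply Nat.sInf_mem
      exact ⟨Fintype.card V, Finset.univ, fun v => ⟨v, mem_univ v, Or.inl rfl⟩, rfl⟩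
    exact this
  obtain ⟨D, hD, hDcard⟩ := hne
  have hle : ∀ S : Finset V, IsDS G S → domNum G ≤ S.card := fun S hS =>
    Nat.sInf_le ⟨S, hS, rfl⟩
  -- The complement of D is also dominating.
  have hcompl : IsDS G Dᶜ := by
    intro v
    by_cases hvD : v ∈ D
    · -- D.erase v is not dominating
      have herase : ¬ IsDS G (D.erase v) := by
        intro hE
        have h1 := hle _ hE
        have h2 : (D.erase v).card = D.card - 1 := Finset.card_erase_of_mem hvD
        have h3 : 0 < D.card := Finset.card_pos.mpr ⟨v, hvD⟩
        omega
      simp only [IsDS, not_forall, not_exists] at herase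
      obtain ⟨w, hw⟩ := herase
      -- hw : ∀ u ∈ D.erase v, ¬(u = w ∨ G.Adj u w)
      by_cases hwv : w = v
      · -- v dominates only itself among D; take a neighbor of v (not in D)
        subst hwv
        obtain ⟨u, hu⟩ := hni w
        refine ⟨u, ?_, Or.inr hu.symm⟩
        simp only [Finset.mem_compl]
        intro huD
        have hune : u ≠ w := fun h => G.irrefl (h ▸ hu)
        exact hw u ⟨Finset.mem_erase.mpr ⟨hune, huD⟩, Or.inr hu.symm⟩
      · -- w is dominated in D only by v, so Adj v w and w ∉ D
        obtain ⟨u, huD, hu⟩ := hD w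
        have huv : u = v := by
          by_contra h
          exact hw u ⟨Finset.mem_erase.mpr ⟨h, huD⟩, hu⟩
        subst huv
        have hadj : G.Adj u w := by
          rcases hu with h | h
          · exact absurd h.symm hwv
          · exact h
        have hwD : w ∉ D := by
          intro h
          exact hw w ⟨Finset.mem_erase.mpr ⟨hwv, h⟩, Or.inl rfl⟩
        exact ⟨w, Finset.mem_compl.mpr hwD, Or.inr hadj.symm⟩
    · exact ⟨v, Finset.mem_compl.mpr hvD, Or.inl rfl⟩
  have h1 : domNum G ≤ Dᶜ.card := hle _ hcompl
  have h2 : Dᶜ.card = n - D.card := by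
    rw [Finset.card_compl, hn]
  have h3 : D.card ≤ n := by rw [hn]; exact Finset.card_le_univ D
  omega
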